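/- For every probability measure P_Z on 𝒵 there exist a measurable encoder f : 𝒳 → {1,…,M} and a decoder g : {1,…,M} → 𝒵 such that the excess-distortion probability satisfies ∫_𝒳 π(x, g(f(x))) dP_X(x) ≤ ∫₀¹ ∫_𝒳 (P_Z({z : π(x,z) > t}))^M dP_X(x) dt. -/
import Mathlib


open MeasureTheory ProbabilityTheory

private lemma integrable_of_bounds01 {α : Type*} [MeasurableSpace α] {μ : Measure α}
    [IsFiniteMeasure μ] {f : α → ℝ} (hf : AEStronglyMeasurable f μ)
    (h0 : ∀ a, 0 ≤ f a) (h1 : ∀ a, f a ≤ 1) : Integrable f μ :=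
  ⟨hf, HasFiniteIntegral.of_bounded (C := 1)
    (Filter.Eventually.of_forall fun a => by
      rw [Real.norm_eq_abs, abs_of_nonneg (h0 a)]; exact h1 a)⟩

private lemma exists_eq_ciInf_fin {M : ℕ} (hM : 1 ≤ M) (f : Fin M → ℝ) :
    ∃ i, (∀ j, f i ≤ f j) ∧ f i = ⨅ j, f j := by
  haveI : Nonempty (Fin M) := ⟨⟨0, hM⟩⟩
  have h1 : sInf (Set.range f) ∈ Set.range f :=
    Set.Nonempty.csInf_mem (Set.range_nonempty f) (Set.finite_range f)
  obtain ⟨i, hi⟩ := h1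
  refine ⟨i, fun j => ?_, hi⟩
  rw [hi]
  exact csInf_le (Set.finite_range f).bddBelow ⟨j, rfl⟩

private lemma lt_ciInf_iff_fin {M : ℕ} (hM : 1 ≤ M) (f : Fin M → ℝ) (a : ℝ) :
    a < (⨅ j, f j) ↔ ∀ j, a < f j := by
  obtain ⟨i, hle, heq⟩ := exists_eq_ciInf_fin hM f
  constructor
  · intro h j
    exact h.trans_le (ciInf_le (Set.finite_range f).bddBelow j)
  · intro h
    rw [← heq]
    exact h i

set_option maxHeartbeats 1000000 in
/-- random-coding achievability bound, Lemma 4 of the paper: for every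
probability measure `P_Z` on `𝒵` there exist a measurable encoder `f : 𝒳 → {1,…,M}` and a
decoder `g : {1,…,M} → 𝒵` with
`∫ π(x, g(f(x))) dP_X ≤ ∫₀¹ ∫ (P_Z{z : π(x,z) > t})^M dP_X dt`, where
`π(x,z) := κ(x)({s : d(s,z) > D})`. -/
theorem stmt_5 {𝒳 𝒮 𝒵 : Type*} [MeasurableSpace 𝒳] [MeasurableSpace 𝒮] [MeasurableSpace 𝒵]
    (P_X : Measure 𝒳) [IsProbabilityMeasure P_X]
    (κ : Kernel 𝒳 𝒮) [IsMarkovKernel κ]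
    (d : 𝒮 × 𝒵 → ℝ) (hd : Measurable d) (D : ℝ) (M : ℕ) (hM : 1 ≤ M)
    (P_Z : Measure 𝒵) [IsProbabilityMeasure P_Z] :
    ∃ f : 𝒳 → Fin M, ∃ g : Fin M → 𝒵, Measurable f ∧
      ∫ x, ((κ x) {s | d (s, g (f x)) > D}).toReal ∂P_X
        ≤ ∫ t in Set.Ioo (0 : ℝ) 1,
            ∫ x, (P_Z {z | ((κ x) {s | d (s, z) > D}).toReal > t}).toReal ^ M ∂P_X := by
  classical
  haveI : Nonempty (Fin M) := ⟨⟨0, hM⟩⟩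
  haveI hfin : IsFiniteMeasure (volume.restrict (Set.Ioo (0:ℝ) 1)) := by
    constructor
    rw [Measure.restrict_apply_univ]
    simp [Real.volume_Ioo]
  set π : 𝒳 → 𝒵 → ℝ := fun x z => ((κ x) {s | d (s, z) > D}).toReal with hπdef
  -- joint measurability of π
  have hπmeas : Measurable (Function.uncurry π) := by
    have hset : MeasurableSet {q : (𝒳 × 𝒵) × 𝒮 | d (q.2, q.1.2) > D} :=
      measurableSet_lt measurable_const (hd.comp (measurable_snd.prodMk measurable_fst.snd))
    set κ' : Kernel (𝒳 × 𝒵) 𝒮 := κ.comap Prod.fst measurable_fst with hκ'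
    haveI : IsSFiniteKernel κ' := by rw [hκ']; infer_instance
    have h1 : Measurable fun p : 𝒳 × 𝒵 => κ' p
        (Prod.mk p ⁻¹' {q : (𝒳 × 𝒵) × 𝒮 | d (q.2, q.1.2) > D}) :=
      ProbabilityTheory.Kernel.measurable_kernel_prodMk_left hset
    rw [hκ'] at h1
    simp only [Kernel.comap_apply] at h1
    have h2 : Measurable fun p : 𝒳 × 𝒵 => (κ p.1) {s | d (s, p.2) > D} := h1
    exact h2.ennreal_toReal
  have hπ0 : ∀ x z, 0 ≤ π x z := fun x z => ENNReal.toReal_nonneg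
  have hπ1 : ∀ x z, π x z ≤ 1 := by
    intro x z
    have h := ENNReal.toReal_mono (by simp) (prob_le_one (μ := κ x)
      (s := {s | d (s, z) > D}))
    simpa using h
  set μc : Measure (Fin M → 𝒵) := Measure.pi fun _ => P_Z with hμc
  haveI : IsProbabilityMeasure μc := by rw [hμc]; infer_instance
  set G : (Fin M → 𝒵) → 𝒳 → ℝ := fun c x => ⨅ i, π x (c i) with hGdef
  have hGmeas : Measurable fun p : (Fin M → 𝒵) × 𝒳 => G p.1 p.2 := by
    apply Measurable.iInf
    intro i
    exact hπmeas.comp (measurable_snd.prodMk ((measurable_pi_apply i).comp measurable_fst))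
  have hG0 : ∀ c x, 0 ≤ G c x := fun c x => le_ciInf fun i => hπ0 _ _
  have hG1 : ∀ c x, G c x ≤ 1 := fun c x =>
    (ciInf_le (Set.finite_range _).bddBelow ⟨0, hM⟩).trans (hπ1 _ _)
  set H : 𝒳 → ℝ → ℝ := fun x t => (P_Z {z | t < π x z}).toReal ^ M with hHdef
  have hAmeas : Measurable fun p : 𝒳 × ℝ => P_Z {z | p.2 < π p.1 z} := by
    have hset : MeasurableSet {q : (𝒳 × ℝ) × 𝒵 | q.1.2 < π q.1.1 q.2} :=
      measurableSet_lt measurable_fst.snd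
        (hπmeas.comp (measurable_fst.fst.prodMk measurable_snd))
    have h1 : Measurable fun p : 𝒳 × ℝ => (Kernel.const (𝒳 × ℝ) P_Z) p
        (Prod.mk p ⁻¹' {q : (𝒳 × ℝ) × 𝒵 | q.1.2 < π q.1.1 q.2}) :=
      ProbabilityTheory.Kernel.measurable_kernel_prodMk_left hset
    have heq : (fun p : 𝒳 × ℝ => P_Z {z | p.2 < π p.1 z})
        = fun p : 𝒳 × ℝ => (Kernel.const (𝒳 × ℝ) P_Z) p
          (Prod.mk p ⁻¹' {q : (𝒳 × ℝ) × 𝒵 | q.1.2 < π q.1.1 q.2}) := by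
      funext p
      rw [Kernel.const_apply]
      rfl
    rw [heq]
    exact h1
  have hHmeas : Measurable fun p : 𝒳 × ℝ => H p.1 p.2 :=
    hAmeas.ennreal_toReal.pow_const M
  have hH0 : ∀ x t, 0 ≤ H x t := fun x t => pow_nonneg ENNReal.toReal_nonneg M
  have hH1 : ∀ x t, H x t ≤ 1 := by
    intro x t
    apply pow_le_one₀ ENNReal.toReal_nonneg
    have h := ENNReal.toReal_mono (by simp) (prob_le_one (μ := P_Z) (s := {z | t < π x z}))
    simpa using h
  -- key pointwise identity
  have key : ∀ x, ∫ c, G c x ∂μc = ∫ t in Set.Ioo (0:ℝ) 1, H x t := by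
    intro x
    have hGx_meas : Measurable fun c => G c x := by
      have := hGmeas.comp (f := fun c : Fin M → 𝒵 => (c, x))
        (measurable_id.prodMk measurable_const)
      exact this
    have hGint : Integrable (fun c => G c x) μc :=
      integrable_of_bounds01 hGx_meas.aestronglyMeasurable (fun c => hG0 c x)
        (fun c => hG1 c x)
    rw [hGint.integral_eq_integral_meas_lt
      (Filter.Eventually.of_forall fun c => hG0 c x)]
    have hmeas_eq : ∀ t : ℝ, (μc {a | t < G a x}).toReal = H x t := by
      intro t
      have hset_eq : {a | t < G a x} = Set.pi Set.univ fun _ : Fin M => {z | t < π x z} := by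
        ext c
        simp only [Set.mem_setOf_eq, Set.mem_pi, Set.mem_univ, forall_true_left, hGdef]
        exact lt_ciInf_iff_fin hM _ _
      rw [hset_eq, hμc, Measure.pi_pi]
      simp [hHdef, Finset.prod_const, ENNReal.toReal_pow]
    have hHx_meas : Measurable fun t => H x t := by
      have := hHmeas.comp (f := fun t : ℝ => (x, t))
        (measurable_const.prodMk measurable_id)
      exact this
    have hH_zero : ∀ t ∈ Set.Ici (1:ℝ), H x t = 0 := by
      intro t ht
      have hempty : {z | t < π x z} = (∅ : Set 𝒵) := by
        ext z
        simp only [Set.mem_setOf_eq, Set.mem_empty_iff_false, iff_false, not_lt]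
        exact (hπ1 x z).trans ht
      rw [hHdef]
      simp only [hempty, measure_empty, ENNReal.toReal_zero]
      exact zero_pow (by omega)
    have hsplit : Set.Ioi (0:ℝ) = Set.Ioo 0 1 ∪ Set.Ici 1 := by
      ext t
      simp only [Set.mem_Ioi, Set.mem_union, Set.mem_Ioo, Set.mem_Ici]
      constructor
      · intro h
        rcases lt_or_ge t 1 with h1 | h1
        · exact Or.inl ⟨h, h1⟩
        · exact Or.inr h1
      · rintro (⟨h, -⟩ | h)
        · exact h
        · linarith
    have hdisj : Disjoint (Set.Ioo (0:ℝ) 1) (Set.Ici 1) := by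
      rw [Set.disjoint_left]
      rintro t ⟨-, h1⟩ h2
      exact absurd h2 (not_le.mpr h1)
    have hint1 : IntegrableOn (fun t => H x t) (Set.Ioo (0:ℝ) 1) volume :=
      integrable_of_bounds01 hHx_meas.aestronglyMeasurable (hH0 x) (hH1 x)
    have hint2 : IntegrableOn (fun t => H x t) (Set.Ici (1:ℝ)) volume := by
      rw [integrableOn_congr_fun hH_zero measurableSet_Ici]
      exact integrableOn_zero
    calc ∫ t in Set.Ioi (0:ℝ), (μc {a | t < G a x}).toReal
        = ∫ t in Set.Ioi (0:ℝ), H x t :=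
          setIntegral_congr_fun measurableSet_Ioi fun t _ => hmeas_eq t
      _ = (∫ t in Set.Ioo (0:ℝ) 1, H x t) + ∫ t in Set.Ici (1:ℝ), H x t := by
          rw [hsplit, setIntegral_union hdisj measurableSet_Ici hint1 hint2]
      _ = ∫ t in Set.Ioo (0:ℝ) 1, H x t := by
          rw [setIntegral_eq_zero_of_forall_eq_zero hH_zero, add_zero]
  -- Fubini arguments
  have hGint_prod : Integrable (Function.uncurry fun c x => G c x) (μc.prod P_X) :=
    integrable_of_bounds01 hGmeas.aestronglyMeasurable (fun p => hG0 p.1 p.2)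
      (fun p => hG1 p.1 p.2)
  have swap1 : ∫ c, (∫ x, G c x ∂P_X) ∂μc = ∫ x, (∫ c, G c x ∂μc) ∂P_X :=
    integral_integral_swap hGint_prod
  have hHint_prod : Integrable (Function.uncurry H)
      (P_X.prod (volume.restrict (Set.Ioo (0:ℝ) 1))) :=
    integrable_of_bounds01 hHmeas.aestronglyMeasurable (fun p => hH0 p.1 p.2)
      (fun p => hH1 p.1 p.2)
  have swap2 : ∫ x, (∫ t in Set.Ioo (0:ℝ) 1, H x t) ∂P_X
      = ∫ t in Set.Ioo (0:ℝ) 1, (∫ x, H x t ∂P_X) :=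
    integral_integral_swap hHint_prod
  have hVmeas : Measurable fun c => ∫ x, G c x ∂P_X :=
    (hGmeas.stronglyMeasurable.integral_prod_right').measurable
  have hVint : Integrable (fun c => ∫ x, G c x ∂P_X) μc := by
    apply integrable_of_bounds01 hVmeas.aestronglyMeasurable
    · intro c
      exact integral_nonneg (hG0 c)
    · intro c
      have hone : (∫ _x, (1:ℝ) ∂P_X) = 1 := by simp
      have hGcx_meas : Measurable fun x => G c x := by
        have := hGmeas.comp (f := fun x : 𝒳 => (c, x))
          (measurable_const.prodMk measurable_id)
        exact this
      have hGcx : Integrable (fun x => G c x) P_X :=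
        integrable_of_bounds01 hGcx_meas.aestronglyMeasurable (hG0 c) (hG1 c)
      calc ∫ x, G c x ∂P_X ≤ ∫ _x, (1:ℝ) ∂P_X :=
            integral_mono hGcx (integrable_const 1) (hG1 c)
        _ = 1 := hone
  have hmean : ∫ c, (∫ x, G c x ∂P_X) ∂μc
      = ∫ t in Set.Ioo (0:ℝ) 1, (∫ x, H x t ∂P_X) := by
    rw [swap1, integral_congr_ae (Filter.Eventually.of_forall key), swap2]
  obtain ⟨c, hc⟩ := exists_le_integral hVint
  -- construct the measurable encoder
  have hp : ∀ x : 𝒳, ∃ n : ℕ, ∃ h : n < M, ∀ j, π x (c ⟨n, h⟩) ≤ π x (c j) := by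
    intro x
    obtain ⟨i, hi, -⟩ := exists_eq_ciInf_fin hM fun j => π x (c j)
    exact ⟨i.1, i.2, hi⟩
  have hpm : ∀ k : ℕ, MeasurableSet {x : 𝒳 | ∃ h : k < M, ∀ j, π x (c ⟨k, h⟩) ≤ π x (c j)} := by
    intro k
    by_cases h : k < M
    · have heq : {x : 𝒳 | ∃ h : k < M, ∀ j, π x (c ⟨k, h⟩) ≤ π x (c j)}
          = ⋂ j, {x : 𝒳 | π x (c ⟨k, h⟩) ≤ π x (c j)} := by
        ext x
        constructor
        · rintro ⟨h', hx⟩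
          exact Set.mem_iInter.mpr hx
        · intro hx
          exact ⟨h, Set.mem_iInter.mp hx⟩
      rw [heq]
      have hπc : ∀ i : Fin M, Measurable fun x => π x (c i) := by
        intro i
        have := hπmeas.comp (f := fun x : 𝒳 => (x, c i))
          (measurable_id.prodMk measurable_const)
        exact this
      exact MeasurableSet.iInter fun j => measurableSet_le (hπc _) (hπc j)
    · have heq : {x : 𝒳 | ∃ h : k < M, ∀ j, π x (c ⟨k, h⟩) ≤ π x (c j)} = ∅ := by
        ext x
        simp only [Set.mem_setOf_eq, Set.mem_empty_iff_false, iff_false]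
        rintro ⟨h', -⟩
        exact h h'
      rw [heq]
      exact MeasurableSet.empty
  have hNmeas : Measurable fun x => Nat.find (hp x) := measurable_find hp hpm
  have hNlt : ∀ x, Nat.find (hp x) < M := by
    intro x
    obtain ⟨h, -⟩ := Nat.find_spec (hp x)
    exact h
  set f : 𝒳 → Fin M := fun x => ⟨Nat.find (hp x), hNlt x⟩ with hfdef
  have hfmeas : Measurable f := by
    apply measurable_to_countable'
    intro i
    have heq : f ⁻¹' {i} = (fun x => Nat.find (hp x)) ⁻¹' {(i : ℕ)} := by
      ext x
      simp only [Set.mem_preimage, Set.mem_singleton_iff, hfdef, Fin.ext_iff]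
    rw [heq]
    exact hNmeas (measurableSet_singleton _)
  have hfmin : ∀ x j, π x (c (f x)) ≤ π x (c j) := by
    intro x j
    obtain ⟨h, hh⟩ := Nat.find_spec (hp x)
    exact hh j
  refine ⟨f, c, hfmeas, ?_⟩
  have hLHS : (∫ x, ((κ x) {s | d (s, c (f x)) > D}).toReal ∂P_X)
      = ∫ x, G c x ∂P_X := by
    apply integral_congr_ae
    apply Filter.Eventually.of_forall
    intro x
    have h1 : π x (c (f x)) = G c x :=
      le_antisymm (le_ciInf (hfmin x)) (ciInf_le (Set.finite_range _).bddBelow (f x))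
    exact h1
  rw [hLHS]
  calc ∫ x, G c x ∂P_X ≤ ∫ c, (∫ x, G c x ∂P_X) ∂μc := hc
    _ = ∫ t in Set.Ioo (0:ℝ) 1, (∫ x, H x t ∂P_X) := hmean
    _ = ∫ t in Set.Ioo (0:ℝ) 1,
          ∫ x, (P_Z {z | ((κ x) {s | d (s, z) > D}).toReal > t}).toReal ^ M ∂P_X := rfl
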